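/- Let p be prime and f ∈ 𝔽_p[x] of degree n with 1 < n < p. If f is not a permutation polynomial modulo p (i.e. its image Ω_p is a proper subset of 𝔽_p), then |Ω_p| ≤ p − (p−1)/n. (Wan's bound, stated as an inequality of natural numbers: n·|Ω_p| ≤ n·p − (p−1).) -/

import Mathlib

open Polynomial Finset

/-- Sum of a polynomial of degree `< p - 1` over all of `ZMod p` vanishes. -/
lemma wan_aux_sum_eval_eq_zero (p : ℕ) [Fact p.Prime] (g : Polynomial (ZMod p))
    (hg : g.natDegree < p - 1) : ∑ x : ZMod p, g.eval x = 0 := by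
  have hq : Fintype.card (ZMod p) = p := ZMod.card p
  calc ∑ x : ZMod p, g.eval x
      = ∑ x : ZMod p, ∑ j ∈ Finset.range (g.natDegree + 1), g.coeff j * x ^ j := by
        refine Finset.sum_congr rfl fun x _ => ?_
        exact g.eval_eq_sum_range x
    _ = ∑ j ∈ Finset.range (g.natDegree + 1), ∑ x : ZMod p, g.coeff j * x ^ j :=
        Finset.sum_comm
    _ = 0 := by
        refine Finset.sum_eq_zero fun j hj => ?_
        rw [← Finset.mul_sum]
        have : (∑ x : ZMod p, x ^ j) = 0 := by
          apply FiniteField.sum_pow_lt_card_sub_one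
          rw [hq]
          exact lt_of_le_of_lt (Nat.lt_succ_iff.mp (Finset.mem_range.mp hj)) hg
        rw [this, mul_zero]

/-- Newton's identity specialized to the multiset of values of `v`. -/
lemma wan_aux_newton (p : ℕ) [Fact p.Prime] (v : ZMod p → ZMod p) (k : ℕ) :
    (k : ZMod p) * (Finset.univ.val.map v).esymm k =
      (-1) ^ (k + 1) * ∑ a ∈ Finset.HasAntidiagonal.antidiagonal k with a.1 < k,
        (-1) ^ a.1 * (Finset.univ.val.map v).esymm a.1 * ∑ x : ZMod p, v x ^ a.2 := by
  have h := congrArg (MvPolynomial.aeval v) (MvPolynomial.mul_esymm_eq_sum (ZMod p) (ZMod p) k)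
  simp only [map_mul, map_sum, map_pow, MvPolynomial.aeval_esymm_eq_multiset_esymm] at h
  simpa [map_sum, MvPolynomial.aeval_esymm_eq_multiset_esymm, MvPolynomial.psum,
    mul_assoc] using h

/-- Arithmetic endgame of Wan's bound. -/
lemma wan_aux_arith (n p K m : ℕ) (h1 : 1 < n) (h2 : n < p) (hK : K = (p - 2) / n)
    (hm : m ≤ p - 1 - K) : n * m ≤ n * p - (p - 1) := by
  have hKle : K ≤ p - 2 := hK ▸ Nat.div_le_self _ _
  have h5 : p - 2 < (K + 1) * n := by
    refine (Nat.div_lt_iff_lt_mul (by omega)).mp ?_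
    omega
  set a := p - 1 - K with ha
  have e1 : a + K = p - 1 := by omega
  have e2 : p - 1 ≤ n * K + n := by
    calc p - 1 ≤ (K + 1) * n := by omega
      _ = n * K + n := by ring
  have key : n * a + (p - 1) ≤ n * p := by
    calc n * a + (p - 1) ≤ n * a + (n * K + n) := Nat.add_le_add_left e2 _
      _ = n * (a + K) + n := by ring
      _ = n * (p - 1) + n := by rw [e1]
      _ = n * (p - 1 + 1) := by ring
      _ = n * p := by congr 1; omega
  calc n * m ≤ n * a := Nat.mul_le_mul_left n hm
    _ ≤ n * p - (p - 1) := Nat.le_sub_of_add_le key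

/-- Wan's bound: if `f ∈ 𝔽_p[x]` has degree `n` with `1 < n < p` and `f` is not a
permutation polynomial mod `p`, then `|Ω_p| ≤ p - (p-1)/n`, stated as
`n·|Ω_p| ≤ n·p - (p-1)`. -/
theorem wan_bound (p : ℕ) (hp : p.Prime) (f : Polynomial (ZMod p)) (n : ℕ)
    (hn : f.natDegree = n) (h1 : 1 < n) (h2 : n < p)
    (hnotperm : ¬ Function.Surjective fun x : ZMod p => f.eval x) :
    n * Nat.card (Set.range fun x : ZMod p => f.eval x) ≤ n * p - (p - 1) := by
  haveI : Fact p.Prime := ⟨hp⟩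
  set v : ZMod p → ZMod p := fun x => f.eval x with hv
  set K : ℕ := (p - 2) / n with hK
  have hp3 : 3 ≤ p := by omega
  have hKle : K ≤ p - 2 := Nat.div_le_self _ _
  -- power sums vanish
  have hpsum : ∀ k : ℕ, 1 ≤ k → k ≤ K → (∑ x : ZMod p, v x ^ k) = 0 := by
    intro k hk1 hkK
    have : (∑ x : ZMod p, v x ^ k) = ∑ x : ZMod p, (f ^ k).eval x := by
      simp [hv, eval_pow]
    rw [this]
    apply wan_aux_sum_eval_eq_zero
    have hle : (f ^ k).natDegree ≤ k * n := by
      rw [← hn]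
      exact Polynomial.natDegree_pow_le
    have hkn : k * n ≤ p - 2 := by
      calc k * n ≤ K * n := Nat.mul_le_mul_right _ hkK
        _ = n * K := Nat.mul_comm _ _
        _ ≤ p - 2 := Nat.mul_div_le _ _
    omega
  -- elementary symmetric functions vanish
  have hesymm : ∀ k : ℕ, 1 ≤ k → k ≤ K → (Finset.univ.val.map v).esymm k = 0 := by
    intro k hk1 hkK
    have hnz : (k : ZMod p) ≠ 0 := by
      rw [Ne, ZMod.natCast_eq_zero_iff]
      intro hdvd
      have := Nat.le_of_dvd (by omega) hdvd
      omega
    have h := wan_aux_newton p v k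
    have hz : (∑ a ∈ Finset.HasAntidiagonal.antidiagonal k with a.1 < k,
        (-1) ^ a.1 * (Finset.univ.val.map v).esymm a.1 * ∑ x : ZMod p, v x ^ a.2) = 0 := by
      refine Finset.sum_eq_zero fun a ha => ?_
      rw [Finset.mem_filter, Finset.HasAntidiagonal.mem_antidiagonal] at ha
      have ha2 : 1 ≤ a.2 ∧ a.2 ≤ K := by omega
      rw [hpsum a.2 ha2.1 ha2.2, mul_zero]
    rw [hz, mul_zero] at h
    exact (mul_eq_zero.mp h).resolve_left hnz
  -- the polynomial h
  set h : Polynomial (ZMod p) := ∏ x : ZMod p, (X - C (v x)) with hh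
  have hcard : Multiset.card (Finset.univ.val.map v) = p := by
    simp [ZMod.card p]
  have hhm : h = ((Finset.univ.val.map v).map fun t => X - C t).prod := by
    rw [hh, Finset.prod]
    simp [Multiset.map_map, Function.comp]
  -- coefficients of h
  have hcoeff : ∀ k : ℕ, k ≤ p → h.coeff (p - k) = (-1) ^ k * (Finset.univ.val.map v).esymm k := by
    intro k hk
    rw [hhm, Multiset.prod_X_sub_C_coeff _ (by rw [hcard]; omega)]
    rw [hcard]
    congr 2 <;> omega
  have hdh : h.natDegree = p := by
    rw [hh, Polynomial.natDegree_prod_of_monic _ _ (fun i _ => monic_X_sub_C (v i))]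
    simp [Polynomial.natDegree_X_sub_C, ZMod.card]
  -- the polynomial r
  set r : Polynomial (ZMod p) := h - (X ^ p - X) with hr
  have hr_ne : r ≠ 0 := by
    intro hr0
    apply hnotperm
    intro a
    have hha : h.eval a = 0 := by
      have hhx : h = X ^ p - X := by rwa [sub_eq_zero] at hr0
      rw [hhx]
      simp [ZMod.pow_card]
    rw [hh] at hha
    simp only [eval_prod, eval_sub, eval_X, eval_C] at hha
    obtain ⟨x, -, hx⟩ := Finset.prod_eq_zero_iff.mp hha
    exact ⟨x, (sub_eq_zero.mp hx).symm⟩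
  have hrdeg : r.natDegree ≤ p - 1 - K := by
    rw [Polynomial.natDegree_le_iff_coeff_eq_zero]
    intro j hj
    have hcoeffh : h.coeff j = (X ^ p - X : Polynomial (ZMod p)).coeff j := by
      rcases lt_trichotomy j p with hjp | hjp | hjp
      · -- p - K ≤ j < p
        have hk : j = p - (p - j) := by omega
        rw [hk, hcoeff (p - j) (by omega), hesymm (p - j) (by omega) (by omega), mul_zero]
        rw [Polynomial.coeff_sub, Polynomial.coeff_X_pow, Polynomial.coeff_X]
        have hne1 : ¬(p - (p - j) = p) := by omega
        have hne2 : ¬((1 : ℕ) = p - (p - j)) := by omega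
        simp [hne1, hne2]
      · -- j = p
        have hj0 : j = p - 0 := by omega
        rw [hj0, hcoeff 0 (by omega)]
        rw [Polynomial.coeff_sub, Polynomial.coeff_X_pow, Polynomial.coeff_X]
        have hne2 : ¬((1 : ℕ) = p - 0) := by omega
        have hne3 : ¬((1 : ℕ) = p) := by omega
        simp [Multiset.esymm, hne2, hne3]
      · -- j > p
        have hz1 : h.coeff j = 0 :=
          Polynomial.coeff_eq_zero_of_natDegree_lt (by rw [hdh]; exact hjp)
        rw [hz1, Polynomial.coeff_sub, Polynomial.coeff_X_pow, Polynomial.coeff_X]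
        have hne1 : ¬(j = p) := by omega
        have hne2 : ¬((1 : ℕ) = j) := by omega
        simp [hne1, hne2]
    rw [hr, Polynomial.coeff_sub, hcoeffh, sub_self]
  -- the value set consists of roots of r
  have hroots : ∀ c ∈ Set.range v, r.eval c = 0 := by
    intro c hc
    obtain ⟨x₀, hx₀⟩ := hc
    have h0 : h.eval c = 0 := by
      rw [hh, eval_prod]
      apply Finset.prod_eq_zero (Finset.mem_univ x₀)
      simp [hx₀]
    rw [hr]
    simp [h0, ZMod.pow_card]
  have hm : Nat.card (Set.range v) ≤ p - 1 - K := by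
    classical
    have hfin : (Set.range v).toFinset.card = Nat.card (Set.range v) := by
      rw [Set.toFinset_card, Nat.card_eq_fintype_card]
    have hsub : (Set.range v).toFinset ⊆ r.roots.toFinset := by
      intro c hc
      rw [Set.mem_toFinset] at hc
      rw [Multiset.mem_toFinset, Polynomial.mem_roots hr_ne]
      exact hroots c hc
    calc Nat.card (Set.range v) = (Set.range v).toFinset.card := hfin.symm
      _ ≤ r.roots.toFinset.card := Finset.card_le_card hsub
      _ ≤ Multiset.card r.roots := Multiset.toFinset_card_le _
      _ ≤ r.natDegree := Polynomial.card_roots' r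
      _ ≤ p - 1 - K := hrdeg
  exact wan_aux_arith n p K _ h1 h2 hK hm
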